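/- Let A₁, A₂, B₁, B₂ be bounded operators with A₁A₂ = A₂A₁ and B₁B₂ = B₂B₁. If Δ_{A₁,B₁}^m(I) = 0 and Δ_{A₂,B₂}^n(I) = 0, then Δ_{A₁A₂, B₁B₂}^{m+n-1}(I) = 0. -/
import Mathlib


open Finset

/-- Δ_{A,B}^r(I) = ∑_{j=0}^r (-1)^j C(r,j) A^{r-j} B^{r-j} -/
noncomputable def elemDelta {X : Type*} [NormedAddCommGroup X] [NormedSpace ℂ X]
    (A B : X →L[ℂ] X) (r : ℕ) : X →L[ℂ] X :=
  ∑ j ∈ Finset.range (r + 1), ((-1 : ℂ) ^ j * (r.choose j : ℂ)) • (A ^ (r - j) * B ^ (r - j))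

/-- δ_{A,B}^r(I) = ∑_{j=0}^r (-1)^j C(r,j) A^{r-j} B^{j} -/
noncomputable def elemdelta {X : Type*} [NormedAddCommGroup X] [NormedSpace ℂ X]
    (A B : X →L[ℂ] X) (r : ℕ) : X →L[ℂ] X :=
  ∑ j ∈ Finset.range (r + 1), ((-1 : ℂ) ^ j * (r.choose j : ℂ)) • (A ^ (r - j) * B ^ j)

variable {X : Type*} [NormedAddCommGroup X] [NormedSpace ℂ X]

namespace Stmt10Aux

noncomputable def lam (A B : X →L[ℂ] X) : Module.End ℂ (X →L[ℂ] X) where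
  toFun T := A * T * B
  map_add' := by intros; simp [mul_add, add_mul]
  map_smul' := by intros; simp [mul_smul_comm, smul_mul_assoc]

lemma lam_apply (A B T : X →L[ℂ] X) : lam A B T = A * T * B := rfl

lemma lam_pow_apply (A B : X →L[ℂ] X) (k : ℕ) : ((lam A B) ^ k) 1 = A ^ k * B ^ k := by
  induction k with
  | zero => simp
  | succ k ih =>
    rw [pow_succ', Module.End.mul_apply, ih, lam_apply, pow_succ', pow_succ]
    simp [mul_assoc]

lemma elemDelta_eq (A B : X →L[ℂ] X) (r : ℕ) :
    elemDelta A B r = (((lam A B) - 1) ^ r) 1 := by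
  have hc : Commute (-1 : Module.End ℂ (X →L[ℂ] X)) (lam A B) := by
    refine LinearMap.ext fun T => ?_
    simp [Module.End.mul_apply]
  rw [← neg_add_eq_sub, hc.add_pow, LinearMap.sum_apply]
  unfold elemDelta
  refine Finset.sum_congr rfl fun j hj => ?_
  have hneg : ((-1 : Module.End ℂ (X →L[ℂ] X)) ^ j) = ((-1 : ℂ) ^ j) • 1 := by
    rw [(neg_one_smul ℂ (1 : Module.End ℂ (X →L[ℂ] X))).symm, smul_pow, one_pow]
  rw [hneg, Module.End.mul_apply, Module.End.mul_apply, Module.End.natCast_apply,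
    LinearMap.smul_apply, Module.End.one_apply, map_nsmul, lam_pow_apply]
  rw [← Nat.cast_smul_eq_nsmul ℂ, smul_smul]

lemma key {M : Type*} [AddCommGroup M] [Module ℂ M]
    (x y : Module.End ℂ M) (h : Commute x y) (t : M) (m n : ℕ)
    (hm : ((x - 1) ^ m) t = 0) (hn : ((y - 1) ^ n) t = 0) :
    ((x * y - 1) ^ (m + n - 1)) t = 0 := by
  set N := m + n - 1 with hN
  have c1 : Commute (x - 1) y := h.sub_left (Commute.one_left y)
  have c2 : Commute ((x - 1) * y) (y - 1) :=
    (c1.mul_left (Commute.refl y)).sub_right (Commute.one_right _)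
  have hd : x * y - 1 = (x - 1) * y + (y - 1) := by noncomm_ring
  rw [hd, c2.add_pow, LinearMap.sum_apply]
  refine Finset.sum_eq_zero fun k hk => ?_
  rw [Finset.mem_range, Nat.lt_succ_iff] at hk
  rw [c1.mul_pow]
  by_cases hkm : m ≤ k
  · have e1 : (x - 1) ^ k = (x - 1) ^ (k - m) * (x - 1) ^ m := by
      rw [← pow_add, Nat.sub_add_cancel hkm]
    have cm : Commute ((x - 1) ^ m)
        (y ^ k * ((y - 1) ^ (N - k) * ((N.choose k : ℕ) : Module.End ℂ M))) :=
      (c1.pow_pow m k).mul_right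
        (((c1.sub_right (Commute.one_right _)).pow_pow m _).mul_right
          (Nat.cast_commute _ _).symm)
    have e : (x - 1) ^ k * y ^ k * (y - 1) ^ (N - k) * ((N.choose k : ℕ) : Module.End ℂ M) =
        ((x - 1) ^ (k - m) * y ^ k * (y - 1) ^ (N - k) *
          ((N.choose k : ℕ) : Module.End ℂ M)) * (x - 1) ^ m := by
      rw [e1]
      simp only [mul_assoc]
      rw [cm.eq]
      simp only [mul_assoc]
    rw [e, Module.End.mul_apply, hm, map_zero]
  · have hkm' : k < m := Nat.lt_of_not_le hkm
    have e2 : (y - 1) ^ (N - k) = (y - 1) ^ (N - k - n) * (y - 1) ^ n := by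
      rw [← pow_add]
      congr 1
      omega
    have hcc : (y - 1) ^ n * ((N.choose k : ℕ) : Module.End ℂ M) =
        ((N.choose k : ℕ) : Module.End ℂ M) * (y - 1) ^ n :=
      ((Nat.cast_commute _ _).symm).eq
    have e : (x - 1) ^ k * y ^ k * (y - 1) ^ (N - k) * ((N.choose k : ℕ) : Module.End ℂ M) =
        ((x - 1) ^ k * y ^ k * (y - 1) ^ (N - k - n) *
          ((N.choose k : ℕ) : Module.End ℂ M)) * (y - 1) ^ n := by
      rw [e2]
      simp only [mul_assoc]
      rw [hcc]
    rw [e, Module.End.mul_apply, hn, map_zero]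

end Stmt10Aux

open Stmt10Aux in
theorem stmt10 (A₁ A₂ B₁ B₂ : X →L[ℂ] X) (m n : ℕ)
    (hA : A₁ * A₂ = A₂ * A₁) (hB : B₁ * B₂ = B₂ * B₁)
    (h1 : elemDelta A₁ B₁ m = 0) (h2 : elemDelta A₂ B₂ n = 0) :
    elemDelta (A₁ * A₂) (B₁ * B₂) (m + n - 1) = 0 := by
  have hxy : Commute (lam A₁ B₁) (lam A₂ B₂) := by
    refine LinearMap.ext fun T => ?_
    simp only [Module.End.mul_apply, lam_apply, mul_assoc]
    rw [hB, ← mul_assoc A₂ A₁, ← hA, mul_assoc]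
  have hz : lam (A₁ * A₂) (B₁ * B₂) = lam A₁ B₁ * lam A₂ B₂ := by
    refine LinearMap.ext fun T => ?_
    simp only [Module.End.mul_apply, lam_apply, mul_assoc]
    rw [hB]
  rw [elemDelta_eq] at h1 h2 ⊢
  rw [hz]
  exact key _ _ hxy 1 m n h1 h2
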